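/- If f ∈ A(𝒢) satisfies |f((0,y))| ≥ 1/2 for every y ∈ Y, then the support {γ ∈ 𝒢 : f(γ) ≠ 0} of f contains a nonempty open subset of 𝒢; in particular, f is not singular. -/

import Mathlib

/-- The unit space `𝒢⁰ = X ⊔ Y ⊔ Z ⊔ {ε}`. -/
inductive U0 : Type
  | x : ℕ → ℕ → U0
  | y : ℕ → U0
  | z : ℕ → U0
  | eps : U0

/-- Basic neighbourhoods `U_{y_i,F} = {y_i} ∪ (X_i \ F)` of `y_i`, where the finite set
`F ⊆ X_i` is recorded by the finite set of second indices `j`. -/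
def Uy (i : ℕ) (F : Finset ℕ) : Set U0 :=
  {u | u = U0.y i ∨ ∃ j ∉ F, u = U0.x i j}

/-- Basic neighbourhoods `U_{F_Y,F_Z} = 𝒢⁰ \ (⋃_{y_i ∈ F_Y} U_{y_i,∅} ∪ F_Z)` of `ε`,
where the finite sets `F_Y ⊆ Y`, `F_Z ⊆ Z` are recorded by finite sets of indices. -/
def UFF (FY FZ : Finset ℕ) : Set U0 :=
  ((⋃ i ∈ FY, Uy i ∅) ∪ (U0.z '' (FZ : Set ℕ)))ᶜ

/-- The topology on the unit space, generated by the basis described above. -/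
instance : TopologicalSpace U0 :=
  TopologicalSpace.generateFrom
    ({s | ∃ i j, s = {U0.x i j}} ∪ {s | ∃ i, s = {U0.z i}} ∪
      {s | ∃ i F, s = Uy i F} ∪ {s | ∃ FY FZ, s = UFF FY FZ})

/-- The groupoid `𝒢 = X ⊔ ((ℤ/2) × Y) ⊔ (G × Z) ⊔ (G × {ε})`, as a set,
where `G = (ℤ/2) × H`. -/
inductive Grpd (H : Type) : Type
  | x : ℕ → ℕ → Grpd H
  | y : ZMod 2 → ℕ → Grpd H
  | z : ZMod 2 × H → ℕ → Grpd H
  | eps : ZMod 2 × H → Grpd H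

/-- The section `σ_g : 𝒢⁰ → 𝒢` associated to `g = (n,h) ∈ G`. -/
def sigmaMap {H : Type} (g : ZMod 2 × H) : U0 → Grpd H
  | U0.x i j => Grpd.x i j
  | U0.y i => Grpd.y g.1 i
  | U0.z i => Grpd.z g i
  | U0.eps => Grpd.eps g

/-- The bisection `U_g = σ_g(𝒢⁰)`. -/
def Ug {H : Type} (g : ZMod 2 × H) : Set (Grpd H) :=
  Set.range (sigmaMap g)

/-- The topology on `𝒢`, generated by the sets `σ_g(U)` for `U ⊆ 𝒢⁰` open. -/
instance (H : Type) : TopologicalSpace (Grpd H) :=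
  TopologicalSpace.generateFrom {s | ∃ (g : ZMod 2 × H) (U : Set U0), IsOpen U ∧ s = sigmaMap g '' U}

/-- The algebra `A(𝒢)`: functions of the form `f = ∑_{g ∈ T} f_g`, `T ⊆ G` finite, where each
`f_g` vanishes outside `U_g` and `f_g ∘ σ_g` is continuous. -/
def AG (H : Type) : Set (Grpd H → ℂ) :=
  {f | ∃ (T : Finset (ZMod 2 × H)) (F : (ZMod 2 × H) → Grpd H → ℂ),
    (∀ g : ZMod 2 × H, ∀ γ ∉ Ug g, F g γ = 0) ∧
    (∀ g : ZMod 2 × H, Continuous (F g ∘ sigmaMap g)) ∧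
    f = fun γ => ∑ g ∈ T, F g γ}

/-- A function on `𝒢` is singular if its support has empty interior. -/
def Singular {H : Type} (f : Grpd H → ℂ) : Prop :=
  interior {γ : Grpd H | f γ ≠ 0} = ∅

open Filter Topology TopologicalSpace

lemma tendsto_yseq : Tendsto (fun i => U0.y i) atTop (nhds U0.eps) := by
  rw [tendsto_nhds_generateFrom_iff]
  rintro s (((⟨i, j, rfl⟩ | ⟨i, rfl⟩) | ⟨i, F, rfl⟩) | ⟨FY, FZ, rfl⟩) hs
  · simp at hs
  · simp at hs
  · simp [Uy] at hs
  · filter_upwards [Filter.eventually_gt_atTop (FY.sup id)] with k hk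
    simp only [Set.mem_preimage, UFF, Set.mem_compl_iff, Set.mem_union, Set.mem_iUnion]
    rintro (⟨i, hi, hmem⟩ | ⟨m, hm, hmem⟩)
    · rcases hmem with h | ⟨j, _, h⟩
      · cases h
        exact absurd (Finset.le_sup (f := id) hi) (by simpa using hk.not_ge)
      · cases h
    · cases hmem

lemma tendsto_zseq : Tendsto (fun i => U0.z i) atTop (nhds U0.eps) := by
  rw [tendsto_nhds_generateFrom_iff]
  rintro s (((⟨i, j, rfl⟩ | ⟨i, rfl⟩) | ⟨i, F, rfl⟩) | ⟨FY, FZ, rfl⟩) hs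
  · simp at hs
  · simp at hs
  · simp [Uy] at hs
  · filter_upwards [Filter.eventually_gt_atTop (FZ.sup id)] with k hk
    simp only [Set.mem_preimage, UFF, Set.mem_compl_iff, Set.mem_union, Set.mem_iUnion]
    rintro (⟨i, hi, hmem⟩ | ⟨m, hm, hmem⟩)
    · rcases hmem with h | ⟨j, _, h⟩ <;> cases h
    · cases hmem
      exact absurd (Finset.le_sup (f := id) hm) (by simpa using hk.not_ge)

/-- If `f ∈ A(𝒢)` satisfies `|f((0,y))| ≥ 1/2` for every `y ∈ Y`, then the support of `f`
contains a nonempty open set; in particular `f` is not singular. -/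
theorem stmt1 (H : Type) [Group H] (f : Grpd H → ℂ) (hf : f ∈ AG H)
    (hy : ∀ i : ℕ, (1 : ℝ) / 2 ≤ ‖f (Grpd.y 0 i)‖) :
    (∃ V : Set (Grpd H), IsOpen V ∧ V.Nonempty ∧ V ⊆ {γ : Grpd H | f γ ≠ 0}) ∧
    ¬ Singular f := by
  classical
  obtain ⟨T, F, hvan, hcont, hfeq⟩ := hf
  set T0 := T.filter (fun g => g.1 = (0 : ZMod 2)) with hT0
  set s0 : U0 → ℂ := fun u => ∑ g ∈ T0, F g (sigmaMap g u) with hs0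
  have hs0cont : Continuous s0 := continuous_finset_sum _ (fun g _ => hcont g)
  have hs0y : ∀ i, s0 (U0.y i) = f (Grpd.y 0 i) := by
    intro i
    rw [hfeq, hs0, hT0]
    simp only [Finset.sum_filter]
    refine Finset.sum_congr rfl fun g _ => ?_
    by_cases h : g.1 = (0 : ZMod 2)
    · simp [h, sigmaMap]
    · simp only [h, if_false]
      refine (hvan g _ ?_).symm
      rintro ⟨u, hu⟩
      cases u <;> simp [sigmaMap] at hu
      exact h hu.1
  -- |s0 ε| ≥ 1/2
  have hlim : Tendsto (fun i => ‖s0 (U0.y i)‖) atTop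
      (nhds ‖s0 U0.eps‖) :=
    (continuous_norm.comp hs0cont).continuousAt.tendsto.comp tendsto_yseq
  have heps : (1 : ℝ) / 2 ≤ ‖s0 U0.eps‖ :=
    ge_of_tendsto' hlim (fun i => by rw [hs0y]; exact hy i)
  have hne : s0 U0.eps ≠ 0 := by
    intro h
    rw [h] at heps
    simp at heps
    linarith
  -- eventually s0 (z i) ≠ 0
  have hzlim : Tendsto (fun i => s0 (U0.z i)) atTop (nhds (s0 U0.eps)) :=
    hs0cont.continuousAt.tendsto.comp tendsto_zseq
  have hev : ∀ᶠ i in atTop, s0 (U0.z i) ≠ 0 :=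
    hzlim (isOpen_compl_singleton.mem_nhds hne)
  obtain ⟨i, hi⟩ := hev.exists
  obtain ⟨g, hgT0, hgne⟩ := Finset.exists_ne_zero_of_sum_ne_zero hi
  have hgT : g ∈ T := (Finset.mem_filter.mp hgT0).1
  -- f (Grpd.z g i) = F g (Grpd.z g i)
  have hfz : f (Grpd.z g i) = F g (Grpd.z g i) := by
    rw [hfeq]
    refine Finset.sum_eq_single_of_mem g hgT fun g' _ hg' => ?_
    refine hvan g' _ ?_
    rintro ⟨u, hu⟩
    cases u <;> simp [sigmaMap] at hu
    exact hg' hu.1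
  have hfzne : f (Grpd.z g i) ≠ 0 := by
    rw [hfz]; exact hgne
  have hVopen : IsOpen ({Grpd.z g i} : Set (Grpd H)) := by
    apply isOpen_generateFrom_of_mem
    refine ⟨g, {U0.z i}, ?_, ?_⟩
    · exact isOpen_generateFrom_of_mem (by left; left; right; exact ⟨i, rfl⟩)
    · simp [sigmaMap]
  refine ⟨⟨{Grpd.z g i}, hVopen, ⟨_, rfl⟩, by simpa using hfzne⟩, ?_⟩
  intro hsing
  have : ({Grpd.z g i} : Set (Grpd H)) ⊆ interior {γ : Grpd H | f γ ≠ 0} :=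
    hVopen.subset_interior_iff.mpr (by simpa using hfzne)
  rw [hsing] at this
  exact this rfl
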